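/- Let k be a local field, let V be a finite-dimensional k-vector space carrying a linear representation of a group L that is faithful and irreducible, and set G = L ⋉ V, the semidirect product of L acting on the additive group of V. Then every normal subgroup M of G is either contained in V or contains V (identifying V with the subgroup {e} × V of G). -/

import Mathlib

/-- The semidirect product `L ⋉ V` of a group `L` acting by automorphisms on the additive
group of `V`: the underlying set is `L × V`. -/
def Sdp (L V : Type*) [Group L] [AddCommGroup V] [DistribMulAction L V] : Type _ := L × V

namespace Sdp

variable {L V : Type*} [Group L] [AddCommGroup V] [DistribMulAction L V]

/-- Build an element of `L ⋉ V` from a group element and a vector. -/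
def mk (l : L) (v : V) : Sdp L V := (l, v)

/-- Group structure on `L ⋉ V`: `(l, v) * (l', v') = (l * l', v + l • v')`. -/
instance : Group (Sdp L V) where
  mul p q := mk (p.1 * q.1) (p.2 + p.1 • q.2)
  one := mk 1 0
  inv p := mk p.1⁻¹ (-(p.1⁻¹ • p.2))
  mul_assoc p q r := by
    show mk ((p.1 * q.1) * r.1) ((p.2 + p.1 • q.2) + (p.1 * q.1) • r.2)
      = mk (p.1 * (q.1 * r.1)) (p.2 + p.1 • (q.2 + q.1 • r.2))
    simp [mk, Prod.mk.injEq, mul_assoc, mul_smul, smul_add, add_assoc]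
    rfl
  one_mul p := by
    show mk (1 * p.1) (0 + (1 : L) • p.2) = p
    simp [mk]
    rfl
  mul_one p := by
    show mk (p.1 * 1) (p.2 + p.1 • (0 : V)) = p
    simp [mk]
    rfl
  inv_mul_cancel p := by
    show mk (p.1⁻¹ * p.1) (-(p.1⁻¹ • p.2) + p.1⁻¹ • p.2) = mk 1 0
    simp [mk]
    rfl

/-- The copy `{1} × V` of the additive group `V` inside `L ⋉ V`. -/
def vsub : Subgroup (Sdp L V) where
  carrier := {p | p.1 = 1}
  one_mem' := rfl
  mul_mem' := by
    intro p q hp hq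
    simp only [Set.mem_setOf_eq] at hp hq
    show p.1 * q.1 = 1
    rw [hp, hq, one_mul]
  inv_mem' := by
    intro p hp
    simp only [Set.mem_setOf_eq] at hp
    show p.1⁻¹ = 1
    rw [hp, inv_one]

end Sdp



section Aux
variable {L V : Type*} [Group L] [AddCommGroup V] [DistribMulAction L V]

@[simp] lemma sdp_mul_fst (p q : Sdp L V) : (p * q).1 = p.1 * q.1 := rfl
@[simp] lemma sdp_mul_snd (p q : Sdp L V) : (p * q).2 = p.2 + p.1 • q.2 := rfl
@[simp] lemma sdp_inv_fst (p : Sdp L V) : (p⁻¹).1 = p.1⁻¹ := rfl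
@[simp] lemma sdp_inv_snd (p : Sdp L V) : (p⁻¹).2 = -(p.1⁻¹ • p.2) := rfl
@[simp] lemma sdp_one_fst : ((1 : Sdp L V)).1 = 1 := rfl
@[simp] lemma sdp_one_snd : ((1 : Sdp L V)).2 = 0 := rfl
@[simp] lemma sdp_mk_fst (l : L) (v : V) : (Sdp.mk l v).1 = l := rfl
@[simp] lemma sdp_mk_snd (l : L) (v : V) : (Sdp.mk l v).2 = v := rfl

lemma sdp_ext {p q : Sdp L V} (h1 : p.1 = q.1) (h2 : p.2 = q.2) : p = q :=
  Prod.ext h1 h2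

/-- The commutator of `(a, b)` with `(1, w)`. -/
lemma sdp_comm (a : L) (b w : V) :
    Sdp.mk a b * (Sdp.mk 1 w * (Sdp.mk a b)⁻¹ * (Sdp.mk 1 w)⁻¹) = Sdp.mk 1 (a • w - w) := by
  refine sdp_ext ?_ ?_
  · simp
  · simp [mul_smul, smul_add, smul_neg, sub_eq_add_neg]
    abel

/-- Conjugation of `p` by `(g, 0)`. -/
lemma sdp_conj (g : L) (p : Sdp L V) :
    Sdp.mk g 0 * p * (Sdp.mk g 0)⁻¹ = Sdp.mk (g * p.1 * g⁻¹) (g • p.2 - (g * p.1 * g⁻¹) • (g • (0:V))) := by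
  refine sdp_ext ?_ ?_
  · simp
  · simp [mul_smul, smul_add, smul_neg, sub_eq_add_neg]

lemma sdp_mk_one_mul (x y : V) : Sdp.mk (1 : L) x * Sdp.mk 1 y = Sdp.mk 1 (x + y) := by
  refine sdp_ext ?_ ?_ <;> simp

lemma sdp_one_eq : (1 : Sdp L V) = Sdp.mk 1 0 := rfl

end Aux

/-- Let `k` be a local field (a nontrivially normed field that is locally
compact), let `V` be a finite-dimensional `k`-vector space carrying a linear representation of
a group `L` that is faithful and irreducible, and set `G = L ⋉ V`. Then every normal subgroup
`M` of `G` is either contained in `V` or contains `V` (identifying `V` with `{1} × V ≤ G`). -/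
theorem stmt11 {k : Type*} [NontriviallyNormedField k] [LocallyCompactSpace k]
    {V : Type*} [AddCommGroup V] [Module k V] [FiniteDimensional k V] [Nontrivial V]
    {L : Type*} [Group L] [DistribMulAction L V] [SMulCommClass k L V]
    (hfaithful : ∀ l : L, (∀ v : V, l • v = v) → l = 1)
    (hirred : ∀ W : Submodule k V, (∀ (l : L), ∀ v ∈ W, l • v ∈ W) → W = ⊥ ∨ W = ⊤)
    (M : Subgroup (Sdp L V)) (hM : M.Normal) :
    M ≤ Sdp.vsub ∨ Sdp.vsub ≤ M := by
  by_cases h : M ≤ Sdp.vsub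
  · exact Or.inl h
  · right
    simp only [SetLike.le_def, not_forall] at h
    obtain ⟨p, hpM, hp1⟩ := h
    replace hp1 : p.1 ≠ 1 := hp1
    haveI : SMulCommClass L k V := SMulCommClass.symm _ _ _
    set l : L := p.1 with hl
    have hl1 : l ≠ 1 := hp1
    let S : L → (V →ₗ[k] V) := fun g => DistribMulAction.toLinearMap k V g
    let T : L → (V →ₗ[k] V) := fun g => S (g * l * g⁻¹) - LinearMap.id
    have hT : ∀ g w, T g w = (g * l * g⁻¹) • w - w := fun g w => rfl
    set W : Submodule k V := ⨆ g : L, LinearMap.range (T g) with hW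
    have hWinv : ∀ (l' : L), ∀ v ∈ W, l' • v ∈ W := by
      intro l' v hv
      refine Submodule.iSup_induction (motive := fun v => l' • v ∈ W) _ hv ?_ ?_ ?_
      · rintro g v ⟨w, rfl⟩
        have heq : l' • T g w = T (l' * g) (l' • w) := by
          simp [hT, smul_sub, mul_smul, mul_inv_rev]
        rw [heq]
        exact Submodule.mem_iSup_of_mem (l' * g) ⟨l' • w, rfl⟩
      · simpa using W.zero_mem
      · intro x y hx hy
        rw [smul_add]; exact W.add_mem hx hy
    have hWtop : W = ⊤ := by
      rcases hirred W hWinv with hbot | htop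
      · exfalso
        apply hl1
        apply hfaithful
        intro w
        have hw : (1 * l * 1⁻¹) • w - w ∈ W :=
          Submodule.mem_iSup_of_mem 1 ⟨w, hT 1 w⟩
        rw [hbot, Submodule.mem_bot] at hw
        have := sub_eq_zero.mp hw
        simpa using this
      · exact htop
    have key : ∀ v : V, Sdp.mk 1 v ∈ M := by
      have main : ∀ v ∈ W, Sdp.mk 1 v ∈ M := by
        intro v hv
        refine Submodule.iSup_induction (motive := fun v => Sdp.mk 1 v ∈ M) _ hv ?_ ?_ ?_
        · rintro g v ⟨w, rfl⟩
          have hq : Sdp.mk g 0 * p * (Sdp.mk g 0)⁻¹ ∈ M := hM.conj_mem p hpM _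
          set q : Sdp L V := Sdp.mk g 0 * p * (Sdp.mk g 0)⁻¹ with hqdef
          have hq1 : q.1 = g * l * g⁻¹ := by simp [hqdef, hl]
          have hcomm : q * (Sdp.mk 1 w * q⁻¹ * (Sdp.mk 1 w)⁻¹) ∈ M :=
            M.mul_mem hq (hM.conj_mem _ (M.inv_mem hq) _)
          have hqmk : q = Sdp.mk q.1 q.2 := rfl
          rw [hqmk, sdp_comm q.1 q.2 w, hq1] at hcomm
          rw [hT]
          exact hcomm
        · exact M.one_mem
        · intro x y hx hy
          show Sdp.mk 1 (x + y) ∈ M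
          rw [← sdp_mk_one_mul]
          exact M.mul_mem hx hy
      intro v
      exact main v (hWtop ▸ Submodule.mem_top)
    intro x hx
    have hx1 : x.1 = 1 := hx
    have hxe : Sdp.mk 1 x.2 = x := sdp_ext hx1.symm rfl
    rw [← hxe]
    exact key x.2
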